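/- Reachability by swaps: Let T be an f-tree of a query Q satisfying the path constraint and let 𝒜 and ℬ be two nodes of T. Then there exists a finite sequence of swap operations (each exchanging a node with its parent as in the swap operator, and each preserving the path constraint) transforming T into an f-tree T′ of Q in which 𝒜 and ℬ are siblings or one is an ancestor of the other; in particular, roots of distinct trees of a forest count as siblings, so any two nodes can be brought into position for a merge or absorb selection operator. -/

import Mathlib

/-! ## Tuples and relations -/

/-- Attributes. -/
abbrev Att : Type := ℕ
/-- Values (a countable domain). -/
abbrev Val : Type := ℕ

/-- A tuple is a partial map from attributes to values; it is a tuple over a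
schema `S` if it is defined exactly on the attributes of `S`. -/
abbrev Tuple : Type := Att → Option Val

namespace Tuple

/-- `t` is a tuple over the schema `S`. -/
def isOver (t : Tuple) (S : Finset Att) : Prop := ∀ a, (t a).isSome ↔ a ∈ S

/-- Restriction of a tuple to a set of attributes. -/
def restrict (t : Tuple) (P : Finset Att) : Tuple :=
  fun a => if a ∈ P then t a else none

/-- Combination of two tuples (used for products/joins over disjoint schemas). -/
def join (t₁ t₂ : Tuple) : Tuple :=
  fun a => match t₁ a with
    | some v => some v
    | none => t₂ a

end Tuple

/-- The nullary tuple `⟨⟩`. -/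
def emptyTuple : Tuple := fun _ => none

/-- The tuple of the singleton relation `⟨A : a⟩`. -/
def singleTuple (A : Att) (a : Val) : Tuple := fun b => if b = A then some a else none

/-- Projection `π_P` of a relation. -/
def projRel (P : Finset Att) (R : Set Tuple) : Set Tuple := (fun t => t.restrict P) '' R

/-- Product of two relations (over disjoint schemas). -/
def prodRel (R₁ R₂ : Set Tuple) : Set Tuple := Set.image2 Tuple.join R₁ R₂

/-- `R` is a (finite) relation over schema `S`. -/
def IsRelOver (R : Set Tuple) (S : Finset Att) : Prop := R.Finite ∧ ∀ t ∈ R, t.isOver S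

/-! ## F-representations -/

/-- Factorised representations: expressions built from the empty relation,
the nullary tuple, singletons, unions and products. -/
inductive FRep : Type where
  | empty (S : Finset Att) : FRep
  | nullary : FRep
  | single (A : Att) (a : Val) : FRep
  | union (E₁ E₂ : FRep) : FRep
  | prod (E₁ E₂ : FRep) : FRep

namespace FRep

/-- The schema of an f-representation. -/
def schema : FRep → Finset Att
  | empty S => S
  | nullary => ∅
  | single A _ => {A}
  | union E₁ _ => E₁.schema
  | prod E₁ E₂ => E₁.schema ∪ E₂.schema

/-- Well-formedness: unions are over a common schema, products over disjoint schemas. -/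
def WF : FRep → Prop
  | empty _ => True
  | nullary => True
  | single _ _ => True
  | union E₁ E₂ => E₁.WF ∧ E₂.WF ∧ E₁.schema = E₂.schema
  | prod E₁ E₂ => E₁.WF ∧ E₂.WF ∧ Disjoint E₁.schema E₂.schema

/-- The relation `⟦E⟧` denoted by an f-representation `E`. -/
def denote : FRep → Set Tuple
  | empty _ => ∅
  | nullary => {emptyTuple}
  | single A a => {singleTuple A a}
  | union E₁ E₂ => E₁.denote ∪ E₂.denote
  | prod E₁ E₂ => prodRel E₁.denote E₂.denote

/-- The size `|E|`: the number of singletons in `E`. -/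
def size : FRep → ℕ
  | empty _ => 0
  | nullary => 0
  | single _ _ => 1
  | union E₁ E₂ => E₁.size + E₂.size
  | prod E₁ E₂ => E₁.size + E₂.size

/-- Number of `A`-singletons occurring in `E`. -/
def countAtt (A : Att) : FRep → ℕ
  | empty _ => 0
  | nullary => 0
  | single B _ => if B = A then 1 else 0
  | union E₁ E₂ => countAtt A E₁ + countAtt A E₂
  | prod E₁ E₂ => countAtt A E₁ + countAtt A E₂

end FRep

/-! ## F-trees -/

/-- An f-tree: a rooted tree whose nodes are labelled by sets of attributes.
A forest (`List FTree`) of such trees is an f-tree in the sense of the paper. -/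
inductive FTree : Type where
  | node (label : Finset Att) (children : List FTree) : FTree

/-- An f-tree over a schema is an unordered rooted forest. -/
abbrev Forest := List FTree

def FTree.label : FTree → Finset Att
  | .node l _ => l

def FTree.children : FTree → List FTree
  | .node _ cs => cs

/-- The list of node labels of a tree. -/
def FTree.nodes : FTree → List (Finset Att)
  | .node l cs => l :: (cs.attach.map (fun c => FTree.nodes c.1)).flatten
decreasing_by
  have := List.sizeOf_lt_of_mem c.2
  simp only [FTree.node.sizeOf_spec]
  omega

/-- The list of node labels of a forest. -/
def forestNodes (F : Forest) : List (Finset Att) := (F.map FTree.nodes).flatten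

/-- All attributes appearing in a tree. -/
def FTree.attrs (t : FTree) : Finset Att := t.nodes.foldr (· ∪ ·) ∅

/-- The root-to-leaf paths of a tree, as lists of labels. -/
def FTree.paths : FTree → List (List (Finset Att))
  | .node l cs =>
    match (cs.attach.map (fun c => FTree.paths c.1)).flatten with
    | [] => [[l]]
    | ps => ps.map (l :: ·)
decreasing_by
  have := List.sizeOf_lt_of_mem c.2
  simp only [FTree.node.sizeOf_spec]
  omega

/-- The root-to-leaf paths of a forest. -/
def forestPaths (F : Forest) : List (List (Finset Att)) := (F.map FTree.paths).flatten

/-- `F` is an f-tree over the schema `S`: labels are nonempty, pairwise disjoint,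
and cover exactly `S`. -/
def IsFTreeOver (S : Finset Att) (F : Forest) : Prop :=
  (∀ l ∈ forestNodes F, l.Nonempty) ∧
  (forestNodes F).Pairwise (fun l₁ l₂ => Disjoint l₁ l₂) ∧
  (∀ a : Att, a ∈ S ↔ ∃ l ∈ forestNodes F, a ∈ l)

/-! ## F-representations over f-trees -/

mutual
  /-- `OverForest E F`: `E` is an f-representation over the forest `F`
  (a product of f-representations over the trees of `F`; over the empty forest
  it is `∅` or `⟨⟩`). -/
  inductive OverForest : FRep → Forest → Prop where
    | empty : OverForest (.empty ∅) []
    | nullary : OverForest .nullary []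
    | one {E : FRep} {t : FTree} : OverTree E t → OverForest E [t]
    | cons {E F : FRep} {t : FTree} {ts : Forest} :
        OverTree E t → OverForest F ts → ts ≠ [] → OverForest (.prod E F) (t :: ts)

  /-- `OverTree E t`: `E` is an f-representation over the tree `t`. -/
  inductive OverTree : FRep → FTree → Prop where
    | mk {E : FRep} {l : Finset Att} {cs : List FTree} {vs : Set Val} :
        OverUnion E l cs vs → OverTree E (.node l cs)

  /-- `OverUnion E l cs vs`: `E` is a union, over the distinct values in `vs`,
  of groups `⟨A₁:a⟩ × ⋯ × ⟨A_k:a⟩ × E_a` for the node labelled `l` with child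
  forest `cs`. -/
  inductive OverUnion : FRep → Finset Att → List FTree → Set Val → Prop where
    | empty {l : Finset Att} {cs : List FTree} :
        OverUnion (.empty ((FTree.node l cs).attrs)) l cs ∅
    | group {E : FRep} {l : Finset Att} {cs : List FTree} {a : Val} :
        OverGroup E l cs a → OverUnion E l cs {a}
    | union {E₁ E₂ : FRep} {l : Finset Att} {cs : List FTree} {vs₁ vs₂ : Set Val} :
        OverUnion E₁ l cs vs₁ → OverUnion E₂ l cs vs₂ → Disjoint vs₁ vs₂ →
        OverUnion (.union E₁ E₂) l cs (vs₁ ∪ vs₂)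

  /-- `OverGroup E l cs a`: `E` is `⟨A₁:a⟩ × ⋯ × ⟨A_k:a⟩ × E_a` where
  `{A₁,…,A_k} = l` and `E_a` is over the child forest `cs` (omitted when `cs` is empty). -/
  inductive OverGroup : FRep → Finset Att → List FTree → Val → Prop where
    | leaf {E : FRep} {l : Finset Att} {a : Val} :
        SingProd E l a → OverGroup E l [] a
    | inner {E F : FRep} {l : Finset Att} {cs : List FTree} {a : Val} :
        SingProd E l a → OverForest F cs → cs ≠ [] → OverGroup (.prod E F) l cs a

  /-- `SingProd E l a`: `E` is the product of singletons `⟨A:a⟩` for the attributes `A ∈ l`. -/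
  inductive SingProd : FRep → Finset Att → Val → Prop where
    | single {A : Att} {a : Val} : SingProd (.single A a) {A} a
    | prod {E₁ E₂ : FRep} {l₁ l₂ : Finset Att} {a : Val} :
        SingProd E₁ l₁ a → SingProd E₂ l₂ a → Disjoint l₁ l₂ →
        SingProd (.prod E₁ E₂) (l₁ ∪ l₂) a
end

/-- `R` admits an f-representation over the f-tree (forest) `F`. -/
def HasFRepOver (R : Set Tuple) (F : Forest) : Prop :=
  ∃ E : FRep, OverForest E F ∧ E.denote = R

/-! ## Queries -/

/-- A select-project-join query `Q = π_P σ_φ (R₁ × ⋯ × R_n)`: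
`n` relation symbols with given schemas, a conjunction `eqs` of attribute
equalities, and a projection list `proj`. -/
structure Query where
  n : ℕ
  schemas : Fin n → Finset Att
  eqs : List (Att × Att)
  proj : Finset Att

namespace Query

/-- All attributes of the query. -/
def atts (Q : Query) : Finset Att := Finset.univ.biUnion Q.schemas

/-- Well-formedness: relation schemas are pairwise disjoint, and the projection
list and equalities mention only attributes of the query. -/
def WF (Q : Query) : Prop :=
  (∀ i j : Fin Q.n, i ≠ j → Disjoint (Q.schemas i) (Q.schemas j)) ∧
  Q.proj ⊆ Q.atts ∧ ∀ p ∈ Q.eqs, p.1 ∈ Q.atts ∧ p.2 ∈ Q.atts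

/-- A database for `Q` assigns a finite relation of the right schema to each
relation symbol. -/
def IsDB (Q : Query) (D : Fin Q.n → Set Tuple) : Prop :=
  ∀ i, (D i).Finite ∧ ∀ t ∈ D i, t.isOver (Q.schemas i)

/-- The query result `Q(D)`. -/
def result (Q : Query) (D : Fin Q.n → Set Tuple) : Set Tuple :=
  { t | ∃ f : Tuple, f.isOver Q.atts ∧ (∀ i, f.restrict (Q.schemas i) ∈ D i) ∧
      (∀ p ∈ Q.eqs, f p.1 = f p.2) ∧ t = f.restrict Q.proj }

/-- Attributes transitively equal under the equalities of `φ`. -/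
def equivAtt (Q : Query) : Att → Att → Prop :=
  Relation.EqvGen (fun a b => (a, b) ∈ Q.eqs ∨ (b, a) ∈ Q.eqs)

open scoped Classical in
/-- The equivalence class of an attribute. -/
noncomputable def cls (Q : Query) (a : Att) : Finset Att :=
  Q.atts.filter (fun b => Q.equivAtt a b)

/-- `F` is an f-tree of the query `Q`: its nodes are labelled exactly by the
equivalence classes of the attributes in the projection list, one node per class. -/
def IsFTreeOf (Q : Query) (F : Forest) : Prop :=
  (forestNodes F).Nodup ∧
  ∀ l : Finset Att, l ∈ forestNodes F ↔ ∃ a ∈ Q.proj, l = Q.cls a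

/-- The path constraint: for each relation of `Q`, all nodes labelled by classes
containing its attributes lie on a single root-to-leaf path. -/
def PathConstraint (Q : Query) (F : Forest) : Prop :=
  ∀ i : Fin Q.n, ∃ p ∈ forestPaths F, ∀ l ∈ forestNodes F,
    (l ∩ Q.schemas i).Nonempty → l ∈ p

/-- A fractional edge cover of the classes on a path `p` by the relations of `Q`. -/
def IsFracCover (Q : Query) (p : List (Finset Att)) (x : Fin Q.n → ℝ) : Prop :=
  (∀ i, 0 ≤ x i) ∧
  ∀ l ∈ p, 1 ≤ ∑ i, (if (l ∩ Q.schemas i).Nonempty then x i else 0)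

/-- The fractional edge cover number `ρ*(p)` of a path `p`. -/
noncomputable def rhoStar (Q : Query) (p : List (Finset Att)) : ℝ :=
  sInf { c : ℝ | ∃ x, Q.IsFracCover p x ∧ c = ∑ i, x i }

/-- The parameter `s(T)`: the maximum of `ρ*(p)` over all root-to-leaf paths of `F`. -/
noncomputable def sParam (Q : Query) (F : Forest) : ℝ :=
  sSup { r : ℝ | ∃ p ∈ forestPaths F, r = Q.rhoStar p }

/-- The size `|D|` of a database: the total number of tuples. -/
noncomputable def dbSize (Q : Query) (D : Fin Q.n → Set Tuple) : ℕ :=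
  ∑ i, (D i).ncard

end Query

/-- No relation of `Q` has attributes both in the class `lA` and in a class
labelling a node of the tree `t`. -/
def IndepOf (Q : Query) (lA : Finset Att) (t : FTree) : Prop :=
  ∀ i : Fin Q.n,
    ¬ ((lA ∩ Q.schemas i).Nonempty ∧ ∃ l ∈ t.nodes, (l ∩ Q.schemas i).Nonempty)

/-- The swap operator `χ_{A,B}`: somewhere in the forest, a child `B` (labelled
`lB`, with children `csB`) of a node `A` (labelled `lA`) is made the parent of
`A`; the children `csBB` of `B` that are independent of `A`'s class stay with
`B`, and the remaining children `csBAB` of `B`, together with `A`'s other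
subtrees, become children of `A`. -/
inductive SwapStep (Q : Query) : Forest → Forest → Prop where
  | here {lA lB : Finset Att} {csA₁ csA₂ csB csBB csBAB : Forest} {rest : Forest}
      (hBB : ∀ t ∈ csBB, IndepOf Q lA t)
      (hBAB : ∀ t ∈ csBAB, ¬ IndepOf Q lA t)
      (hperm : csB.Perm (csBB ++ csBAB)) :
      SwapStep Q (FTree.node lA (csA₁ ++ FTree.node lB csB :: csA₂) :: rest)
                 (FTree.node lB (csBB ++ [FTree.node lA (csBAB ++ (csA₁ ++ csA₂))]) :: rest)
  | tail {t : FTree} {ts ts' : Forest} :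
      SwapStep Q ts ts' → SwapStep Q (t :: ts) (t :: ts')
  | inside {l : Finset Att} {cs cs' : Forest} {rest : Forest} :
      SwapStep Q cs cs' →
      SwapStep Q (FTree.node l cs :: rest) (FTree.node l cs' :: rest)

/-- All children lists occurring in a tree. -/
def FTree.childLists : FTree → List (List FTree)
  | .node _ cs => cs :: (cs.attach.map (fun c => FTree.childLists c.1)).flatten
decreasing_by
  have := List.sizeOf_lt_of_mem c.2
  simp only [FTree.node.sizeOf_spec]
  omega

/-- All sibling lists of a forest: the list of roots, and every children list
of a node. -/
def forestLists (F : Forest) : List (List FTree) :=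
  F :: (F.map FTree.childLists).flatten

/-- Two labels are siblings in `F`: they label two trees occurring in the same
sibling list (in particular, roots of distinct trees of the forest count as
siblings). -/
def Siblings (F : Forest) (l₁ l₂ : Finset Att) : Prop :=
  ∃ L ∈ forestLists F, (∃ t ∈ L, FTree.label t = l₁) ∧ (∃ t ∈ L, FTree.label t = l₂)

/-- Two labels lie on a common root-to-leaf path of `F` (so one labels an
ancestor of the other, or they coincide). -/
def OnSamePath (F : Forest) (l₁ l₂ : Finset Att) : Prop :=
  ∃ p ∈ forestPaths F, l₁ ∈ p ∧ l₂ ∈ p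


/-! ## Auxiliary lemmas for Statement 17 -/

section Aux17

/-- Custom induction principle for `FTree`. -/
theorem FTree.ind {motive : FTree → Prop}
    (h : ∀ l cs, (∀ c ∈ cs, motive c) → motive (FTree.node l cs)) : ∀ t, motive t
  | .node l cs => h l cs (fun c hc => FTree.ind h c)
decreasing_by
  have := List.sizeOf_lt_of_mem hc
  simp only [FTree.node.sizeOf_spec]
  omega

theorem nodes_node (l : Finset Att) (cs : Forest) :
    (FTree.node l cs).nodes = l :: forestNodes cs := by
  rw [FTree.nodes]
  simp [forestNodes, List.attach_map_val]

@[simp] theorem forestNodes_nil : forestNodes [] = [] := rfl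

theorem forestNodes_cons (t : FTree) (ts : Forest) :
    forestNodes (t :: ts) = t.nodes ++ forestNodes ts := by
  simp [forestNodes]

theorem forestNodes_append (F G : Forest) :
    forestNodes (F ++ G) = forestNodes F ++ forestNodes G := by
  simp [forestNodes]

theorem paths_node (l : Finset Att) (cs : Forest) :
    (FTree.node l cs).paths =
      if forestPaths cs = [] then [[l]] else (forestPaths cs).map (l :: ·) := by
  rw [FTree.paths]
  have h : (cs.attach.map (fun c => FTree.paths c.1)).flatten = forestPaths cs := by
    simp [forestPaths, List.attach_map_val]
  rw [h]
  cases hc : forestPaths cs with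
  | nil => simp
  | cons a as => simp

theorem paths_ne_nil (t : FTree) : t.paths ≠ [] := by
  cases t with
  | node l cs =>
    rw [paths_node]
    split <;> simp_all

@[simp] theorem forestPaths_nil : forestPaths [] = [] := rfl

theorem forestPaths_cons (t : FTree) (ts : Forest) :
    forestPaths (t :: ts) = t.paths ++ forestPaths ts := by
  simp [forestPaths]

theorem forestPaths_append (F G : Forest) :
    forestPaths (F ++ G) = forestPaths F ++ forestPaths G := by
  simp [forestPaths]

theorem forestPaths_eq_nil_iff (F : Forest) : forestPaths F = [] ↔ F = [] := by
  cases F with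
  | nil => simp
  | cons t ts => simp [forestPaths_cons, paths_ne_nil t]

theorem mem_forestPaths_iff {q : List (Finset Att)} {F : Forest} :
    q ∈ forestPaths F ↔ ∃ t ∈ F, q ∈ t.paths := by
  simp [forestPaths]

theorem cons_mem_paths_node {q : List (Finset Att)} {l : Finset Att} {cs : Forest}
    (hq : q ∈ forestPaths cs) : (l :: q) ∈ (FTree.node l cs).paths := by
  rw [paths_node]
  have : forestPaths cs ≠ [] := by intro h; simp [h] at hq
  simpa [this] using hq

theorem path_shape {p : List (Finset Att)} {l : Finset Att} {cs : Forest}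
    (hp : p ∈ (FTree.node l cs).paths) :
    ∃ q, p = l :: q ∧ (q ∈ forestPaths cs ∨ (q = [] ∧ cs = [])) := by
  rw [paths_node] at hp
  split at hp
  · rename_i h
    simp at hp
    exact ⟨[], hp, Or.inr ⟨rfl, (forestPaths_eq_nil_iff cs).1 h⟩⟩
  · simp at hp
    obtain ⟨q, hq, rfl⟩ := hp
    exact ⟨q, rfl, Or.inl hq⟩

theorem root_mem_path {p : List (Finset Att)} {l : Finset Att} {cs : Forest}
    (hp : p ∈ (FTree.node l cs).paths) : l ∈ p := by
  obtain ⟨q, rfl, -⟩ := path_shape hp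
  exact List.mem_cons_self

theorem path_subset_nodes : ∀ (t : FTree), ∀ p ∈ t.paths, ∀ x ∈ p, x ∈ t.nodes := by
  intro t
  induction t using FTree.ind with
  | h l cs ih =>
    intro p hp x hx
    obtain ⟨q, rfl, hq⟩ := path_shape hp
    rw [nodes_node]
    rcases List.mem_cons.1 hx with rfl | hx
    · exact List.mem_cons_self
    · rcases hq with hq | ⟨rfl, rfl⟩
      · obtain ⟨c, hc, hqc⟩ := mem_forestPaths_iff.1 hq
        have : x ∈ c.nodes := ih c hc q hqc x hx
        refine List.mem_cons_of_mem _ ?_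
        simp [forestNodes]
        exact ⟨c, hc, this⟩
      · simp at hx

theorem forestPath_subset_nodes {p : List (Finset Att)} {F : Forest}
    (hp : p ∈ forestPaths F) : ∀ x ∈ p, x ∈ forestNodes F := by
  obtain ⟨t, ht, hpt⟩ := mem_forestPaths_iff.1 hp
  intro x hx
  have := path_subset_nodes t p hpt x hx
  simp [forestNodes]
  exact ⟨t, ht, this⟩

theorem mem_nodes_exists_path : ∀ (t : FTree), ∀ x ∈ t.nodes, ∃ p ∈ t.paths, x ∈ p := by
  intro t
  induction t using FTree.ind with
  | h l cs ih =>
    intro x hx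
    rw [nodes_node] at hx
    rcases List.mem_cons.1 hx with rfl | hx
    · obtain ⟨p, hp⟩ := List.exists_mem_of_ne_nil _ (paths_ne_nil (FTree.node x cs))
      exact ⟨p, hp, root_mem_path hp⟩
    · simp [forestNodes] at hx
      obtain ⟨c, hc, hxc⟩ := hx
      obtain ⟨q, hq, hxq⟩ := ih c hc x hxc
      have hqf : q ∈ forestPaths cs := mem_forestPaths_iff.2 ⟨c, hc, hq⟩
      exact ⟨l :: q, cons_mem_paths_node hqf, List.mem_cons_of_mem _ hxq⟩

theorem mem_forestNodes_iff {x : Finset Att} {F : Forest} :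
    x ∈ forestNodes F ↔ ∃ t ∈ F, x ∈ t.nodes := by
  simp [forestNodes]

end Aux17

section Aux17b

theorem forestNodes_perm_of_perm {F G : Forest} (h : F.Perm G) :
    (forestNodes F).Perm (forestNodes G) :=
  (h.map FTree.nodes).flatten

theorem swapStep_nodes_perm {Q : Query} {F F' : Forest} (h : SwapStep Q F F') :
    (forestNodes F).Perm (forestNodes F') := by
  induction h with
  | here hBB hBAB hperm =>
    rename_i lA lB csA₁ csA₂ csB csBB csBAB rest
    have h1 : (forestNodes csB).Perm (forestNodes csBB ++ forestNodes csBAB) := by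
      have := forestNodes_perm_of_perm hperm
      rwa [forestNodes_append] at this
    rw [List.perm_iff_count] at h1 ⊢
    intro a
    have := h1 a
    simp only [forestNodes_cons, forestNodes_append, nodes_node, List.count_append,
      List.count_cons, forestNodes_nil, List.count_nil] at this ⊢
    omega
  | tail _ ih =>
    simp only [forestNodes_cons]
    exact List.Perm.append_left _ ih
  | inside _ ih =>
    simp only [forestNodes_cons, nodes_node]
    exact ((ih.cons _).append_right _)

theorem swapStep_preserves_isFTreeOf {Q : Query} {F F' : Forest}
    (h : SwapStep Q F F') (hT : Q.IsFTreeOf F) : Q.IsFTreeOf F' := by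
  obtain ⟨hnd, hspec⟩ := hT
  have hperm := swapStep_nodes_perm h
  refine ⟨hperm.nodup_iff.1 hnd, fun l => ?_⟩
  rw [← hspec l]
  exact ⟨fun hl => hperm.mem_iff.2 hl, fun hl => hperm.mem_iff.1 hl⟩

theorem swapStep_source_ne_nil {Q : Query} {F F' : Forest} (h : SwapStep Q F F') :
    F ≠ [] := by cases h <;> simp

end Aux17b

section Aux17c

theorem swap_preserves_cover {Q : Query} {F F' : Forest} (hstep : SwapStep Q F F')
    (i : Fin Q.n) :
    (forestNodes F).Nodup →
    ∀ p ∈ forestPaths F, (∀ l ∈ forestNodes F, (l ∩ Q.schemas i).Nonempty → l ∈ p) →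
    ∃ p' ∈ forestPaths F', ∀ l ∈ forestNodes F', (l ∩ Q.schemas i).Nonempty → l ∈ p' := by
  induction hstep with
  | @here lA lB csA₁ csA₂ csB csBB csBAB rest hBB hBAB hperm =>
    intro hnd p hp hcov
    have hstep' : SwapStep Q (FTree.node lA (csA₁ ++ FTree.node lB csB :: csA₂) :: rest)
        (FTree.node lB (csBB ++ [FTree.node lA (csBAB ++ (csA₁ ++ csA₂))]) :: rest) :=
      SwapStep.here hBB hBAB hperm
    have hmem : ∀ l, l ∈ forestNodes (FTree.node lB
          (csBB ++ [FTree.node lA (csBAB ++ (csA₁ ++ csA₂))]) :: rest) →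
        l ∈ forestNodes (FTree.node lA (csA₁ ++ FTree.node lB csB :: csA₂) :: rest) :=
      fun l hl => (swapStep_nodes_perm hstep').mem_iff.2 hl
    set A' := FTree.node lA (csBAB ++ (csA₁ ++ csA₂)) with hA'
    set T' := FTree.node lB (csBB ++ [A']) with hT'
    -- helper path constructors
    have hmk1 : ∀ q' ∈ forestPaths (csBAB ++ (csA₁ ++ csA₂)), (lB :: lA :: q') ∈ T'.paths := by
      intro q' hq'
      have h1 : (lA :: q') ∈ A'.paths := cons_mem_paths_node hq'
      have h2 : (lA :: q') ∈ forestPaths (csBB ++ [A']) :=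
        mem_forestPaths_iff.2 ⟨A', by simp, h1⟩
      exact cons_mem_paths_node h2
    have hmk2 : ∀ q' ∈ forestPaths csBB, (lB :: q') ∈ T'.paths := by
      intro q' hq'
      obtain ⟨u, hu, hqu⟩ := mem_forestPaths_iff.1 hq'
      exact cons_mem_paths_node (mem_forestPaths_iff.2 ⟨u, by simp [hu], hqu⟩)
    obtain ⟨r, hr⟩ := List.exists_mem_of_ne_nil _ (paths_ne_nil A')
    have hrA : lA ∈ r := root_mem_path hr
    have hmkr : (lB :: r) ∈ T'.paths :=
      cons_mem_paths_node (mem_forestPaths_iff.2 ⟨A', by simp, hr⟩)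
    rw [forestPaths_cons, List.mem_append] at hp
    rcases hp with hp | hp
    · -- p through the first (swapped) tree
      obtain ⟨q, rfl, hq⟩ := path_shape hp
      have hcsne : csA₁ ++ FTree.node lB csB :: csA₂ ≠ [] := by simp
      rcases hq with hq | ⟨-, habs⟩
      swap
      · exact absurd habs hcsne
      simp only [forestPaths_append, forestPaths_cons, List.mem_append] at hq
      rcases hq with hq | hq | hq
      · -- through csA₁
        refine ⟨lB :: lA :: q, ?_, ?_⟩
        · rw [forestPaths_cons, List.mem_append]
          exact Or.inl (hmk1 q (by rw [forestPaths_append, forestPaths_append]; simp [hq]))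
        · intro l hl hrel
          have := hcov l (hmem l hl) hrel
          simp only [List.mem_cons] at this ⊢
          tauto
      · -- through the B subtree
        obtain ⟨q₀, rfl, hq₀⟩ := path_shape hq
        rcases hq₀ with hq₀ | ⟨rfl, rfl⟩
        · obtain ⟨u, hu, hqu⟩ := mem_forestPaths_iff.1 hq₀
          have hu' : u ∈ csBB ++ csBAB := hperm.mem_iff.1 hu
          rw [List.mem_append] at hu'
          rcases hu' with hu' | hu'
          · by_cases hRel : (lA ∩ Q.schemas i).Nonempty
            · refine ⟨lB :: r, ?_, ?_⟩
              · rw [forestPaths_cons, List.mem_append]; exact Or.inl hmkr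
              · intro l hl hrel
                have hlp := hcov l (hmem l hl) hrel
                simp only [List.mem_cons] at hlp ⊢
                rcases hlp with rfl | rfl | hlp
                · exact Or.inr hrA
                · exact Or.inl rfl
                · exact absurd ⟨hRel, l, path_subset_nodes u _ hqu l hlp, hrel⟩ (hBB u hu' i)
            · refine ⟨lB :: q₀, ?_, ?_⟩
              · rw [forestPaths_cons, List.mem_append]
                exact Or.inl (hmk2 q₀ (mem_forestPaths_iff.2 ⟨u, hu', hqu⟩))
              · intro l hl hrel
                have hlp := hcov l (hmem l hl) hrel
                simp only [List.mem_cons] at hlp ⊢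
                rcases hlp with rfl | rfl | hlp
                · exact absurd hrel hRel
                · exact Or.inl rfl
                · exact Or.inr hlp
          · refine ⟨lB :: lA :: q₀, ?_, ?_⟩
            · rw [forestPaths_cons, List.mem_append]
              refine Or.inl (hmk1 q₀ ?_)
              rw [forestPaths_append, List.mem_append]
              exact Or.inl (mem_forestPaths_iff.2 ⟨u, hu', hqu⟩)
            · intro l hl hrel
              have hlp := hcov l (hmem l hl) hrel
              simp only [List.mem_cons] at hlp ⊢
              tauto
        · -- csB = []
          refine ⟨lB :: r, ?_, ?_⟩
          · rw [forestPaths_cons, List.mem_append]; exact Or.inl hmkr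
          · intro l hl hrel
            have hlp := hcov l (hmem l hl) hrel
            simp only [List.mem_cons, List.not_mem_nil, or_false] at hlp
            simp only [List.mem_cons]
            rcases hlp with rfl | rfl
            · exact Or.inr hrA
            · exact Or.inl rfl
      · -- through csA₂
        refine ⟨lB :: lA :: q, ?_, ?_⟩
        · rw [forestPaths_cons, List.mem_append]
          exact Or.inl (hmk1 q (by rw [forestPaths_append, forestPaths_append]; simp [hq]))
        · intro l hl hrel
          have := hcov l (hmem l hl) hrel
          simp only [List.mem_cons] at this ⊢
          tauto
    · -- p in rest : unchanged
      refine ⟨p, ?_, ?_⟩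
      · rw [forestPaths_cons, List.mem_append]; exact Or.inr hp
      · intro l hl hrel
        exact hcov l (hmem l hl) hrel
  | @tail t ts ts' hs ih =>
    intro hnd p hp hcov
    rw [forestNodes_cons] at hnd
    have hdisj := List.disjoint_of_nodup_append hnd
    have hndts : (forestNodes ts).Nodup := (List.nodup_append.1 hnd).2.1
    have hpermts := swapStep_nodes_perm hs
    rw [forestPaths_cons, List.mem_append] at hp
    rcases hp with hp | hp
    · refine ⟨p, ?_, ?_⟩
      · rw [forestPaths_cons, List.mem_append]; exact Or.inl hp
      · intro l hl hrel
        rw [forestNodes_cons, List.mem_append] at hl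
        rcases hl with hl | hl
        · exact hcov l (by rw [forestNodes_cons, List.mem_append]; exact Or.inl hl) hrel
        · refine hcov l ?_ hrel
          rw [forestNodes_cons, List.mem_append]
          exact Or.inr (hpermts.mem_iff.2 hl)
    · have hcov' : ∀ l ∈ forestNodes ts, (l ∩ Q.schemas i).Nonempty → l ∈ p := by
        intro l hl hrel
        exact hcov l (by rw [forestNodes_cons, List.mem_append]; exact Or.inr hl) hrel
      obtain ⟨p', hp', hcov''⟩ := ih hndts p hp hcov'
      refine ⟨p', ?_, ?_⟩
      · rw [forestPaths_cons, List.mem_append]; exact Or.inr hp'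
      · intro l hl hrel
        rw [forestNodes_cons, List.mem_append] at hl
        rcases hl with hl | hl
        · have hlp : l ∈ p :=
            hcov l (by rw [forestNodes_cons, List.mem_append]; exact Or.inl hl) hrel
          have : l ∈ forestNodes ts := forestPath_subset_nodes hp l hlp
          exact absurd this (hdisj hl)
        · exact hcov'' l hl hrel
  | @inside l cs cs' rest hs ih =>
    intro hnd p hp hcov
    rw [forestNodes_cons, nodes_node] at hnd
    have hndl : (l :: forestNodes cs).Nodup := (List.nodup_append.1 hnd).1
    have hlncs : l ∉ forestNodes cs := (List.nodup_cons.1 hndl).1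
    have hdisj := List.disjoint_of_nodup_append hnd
    have hlnrest : l ∉ forestNodes rest := hdisj (List.mem_cons_self)
    have hcsdisj : ∀ x ∈ forestNodes cs, x ∉ forestNodes rest :=
      fun x hx => hdisj (List.mem_cons_of_mem _ hx)
    have hndcs : (forestNodes cs).Nodup := (List.nodup_cons.1 hndl).2
    have hperm' := swapStep_nodes_perm hs
    rw [forestPaths_cons, List.mem_append] at hp
    rcases hp with hp | hp
    · obtain ⟨q, rfl, hq⟩ := path_shape hp
      rcases hq with hq | ⟨-, habs⟩
      swap
      · exact absurd habs (swapStep_source_ne_nil hs)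
      have hcov' : ∀ x ∈ forestNodes cs, (x ∩ Q.schemas i).Nonempty → x ∈ q := by
        intro x hx hrel
        have hxp : x ∈ l :: q := hcov x (by
          rw [forestNodes_cons, nodes_node]
          exact List.mem_append_left _ (List.mem_cons_of_mem _ hx)) hrel
        rcases List.mem_cons.1 hxp with rfl | hxq
        · exact absurd hx hlncs
        · exact hxq
      obtain ⟨q', hq', hcov''⟩ := ih hndcs q hq hcov'
      refine ⟨l :: q', ?_, ?_⟩
      · rw [forestPaths_cons, List.mem_append]
        exact Or.inl (cons_mem_paths_node hq')
      · intro x hx hrel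
        rw [forestNodes_cons, nodes_node, List.mem_append, List.mem_cons] at hx
        rcases hx with (rfl | hx) | hx
        · exact List.mem_cons_self
        · exact List.mem_cons_of_mem _ (hcov'' x hx hrel)
        · have hxp : x ∈ l :: q := hcov x (by
            rw [forestNodes_cons, List.mem_append]; exact Or.inr hx) hrel
          rcases List.mem_cons.1 hxp with rfl | hxq
          · exact absurd hx hlnrest
          · exact absurd (forestPath_subset_nodes hq x hxq) (fun h => hcsdisj x h hx)
    · refine ⟨p, ?_, ?_⟩
      · rw [forestPaths_cons, List.mem_append]; exact Or.inr hp
      · intro x hx hrel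
        rw [forestNodes_cons, nodes_node, List.mem_append, List.mem_cons] at hx
        rcases hx with (rfl | hx) | hx
        · exact hcov x (by rw [forestNodes_cons, nodes_node]; simp) hrel
        · exact hcov x (by
            rw [forestNodes_cons, nodes_node, List.mem_append, List.mem_cons]
            exact Or.inl (Or.inr (hperm'.mem_iff.2 hx))) hrel
        · exact hcov x (by rw [forestNodes_cons, List.mem_append]; exact Or.inr hx) hrel

theorem swapStep_preserves_pc {Q : Query} {F F' : Forest} (hstep : SwapStep Q F F')
    (hnd : (forestNodes F).Nodup) (hpc : Q.PathConstraint F) : Q.PathConstraint F' := by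
  intro i
  obtain ⟨p, hp, hcov⟩ := hpc i
  obtain ⟨p', hp', hcov'⟩ := swap_preserves_cover hstep i hnd p hp hcov
  exact ⟨p', hp', hcov'⟩

end Aux17c

section Aux17d

/-- Node labels of a tree together with their depths. -/
def FTree.nodesDepth : FTree → List (Finset Att × ℕ)
  | .node l cs => (l, 0) ::
      ((cs.attach.map (fun c => FTree.nodesDepth c.1)).flatten.map (fun p => (p.1, p.2 + 1)))
decreasing_by
  have := List.sizeOf_lt_of_mem c.2
  simp only [FTree.node.sizeOf_spec]
  omega

def forestND (F : Forest) : List (Finset Att × ℕ) := (F.map FTree.nodesDepth).flatten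

theorem nodesDepth_node (l : Finset Att) (cs : Forest) :
    (FTree.node l cs).nodesDepth = (l, 0) :: (forestND cs).map (fun p => (p.1, p.2 + 1)) := by
  rw [FTree.nodesDepth]
  simp [forestND, List.attach_map_val]

@[simp] theorem forestND_nil : forestND [] = [] := rfl

theorem forestND_cons (t : FTree) (ts : Forest) :
    forestND (t :: ts) = t.nodesDepth ++ forestND ts := by simp [forestND]

theorem nodesDepth_map_fst : ∀ t : FTree, t.nodesDepth.map Prod.fst = t.nodes := by
  intro t
  induction t using FTree.ind with
  | h l cs ih =>
    rw [nodesDepth_node, nodes_node]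
    simp only [List.map_cons, List.map_map]
    congr 1
    have : ∀ cs' : Forest, (∀ c ∈ cs', c.nodesDepth.map Prod.fst = c.nodes) →
        (forestND cs').map (Prod.fst ∘ fun p => (p.1, p.2 + 1)) = forestNodes cs' := by
      intro cs' h
      induction cs' with
      | nil => simp
      | cons c cs'' ih' =>
        rw [forestND_cons, forestNodes_cons, List.map_append]
        rw [ih' (fun c hc => h c (List.mem_cons_of_mem _ hc))]
        congr 1
        have := h c (List.mem_cons_self)
        rw [← this]
        simp [Function.comp]
    exact this cs ih

theorem forestND_map_fst (F : Forest) : (forestND F).map Prod.fst = forestNodes F := by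
  induction F with
  | nil => simp
  | cons t ts ih =>
    rw [forestND_cons, forestNodes_cons, List.map_append, ih, nodesDepth_map_fst]

theorem mem_forestNodes_exists_depth {x : Finset Att} {F : Forest}
    (h : x ∈ forestNodes F) : ∃ d, (x, d) ∈ forestND F := by
  rw [← forestND_map_fst] at h
  obtain ⟨⟨y, d⟩, hm, h⟩ := List.mem_map.1 h
  exact ⟨d, by simpa [← h] using hm⟩

theorem mem_forestNodes_of_depth {x : Finset Att} {d : ℕ} {F : Forest}
    (h : (x, d) ∈ forestND F) : x ∈ forestNodes F := by
  rw [← forestND_map_fst]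
  exact List.mem_map.2 ⟨(x, d), h, rfl⟩

theorem depth_zero_iff_root {x : Finset Att} {F : Forest} :
    (x, 0) ∈ forestND F ↔ ∃ t ∈ F, t.label = x := by
  constructor
  · intro h
    induction F with
    | nil => simp at h
    | cons t ts ih =>
      rw [forestND_cons, List.mem_append] at h
      rcases h with h | h
      · cases t with
        | node l cs =>
          rw [nodesDepth_node] at h
          rcases List.mem_cons.1 h with h | h
          · have hx : x = l := by simpa using congrArg Prod.fst h
            exact ⟨FTree.node l cs, List.mem_cons_self, by simp [FTree.label, hx]⟩
          · obtain ⟨p, -, hp⟩ := List.mem_map.1 h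
            simp at hp
      · obtain ⟨t', ht', h'⟩ := ih h
        exact ⟨t', List.mem_cons_of_mem _ ht', h'⟩
  · rintro ⟨t, ht, rfl⟩
    cases t with
    | node l cs =>
      simp only [forestND, List.mem_flatten]
      refine ⟨(FTree.node l cs).nodesDepth, List.mem_map_of_mem ht, ?_⟩
      rw [nodesDepth_node]
      simp [FTree.label]

end Aux17d

section Aux17e

theorem raise_step (Q : Query) : ∀ (F : Forest) (x : Finset Att) (d : ℕ),
    (x, d + 1) ∈ forestND F →
    ∃ F', SwapStep Q F F' ∧ (x, d) ∈ forestND F' ∧ ∀ t ∈ F, x ∉ t.nodes → t ∈ F'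
  | [], x, d, h => by simp [forestND] at h
  | FTree.node l cs :: ts, x, d, h => by
    rw [forestND_cons, List.mem_append] at h
    rcases h with h | h
    · rw [nodesDepth_node, List.mem_cons] at h
      rcases h with h | h
      · exact absurd (congrArg Prod.snd h) (by simp)
      · obtain ⟨⟨y, d'⟩, hm, he⟩ := List.mem_map.1 h
        have hy : x = y := by
          have := congrArg Prod.fst he
          simp at this
          exact this.symm
        subst hy
        have hd : d' + 1 = d + 1 := by
          have := congrArg Prod.snd he
          simpa using this
        rcases d with _ | d
        · -- x is a root of cs : perform the swap here
          have hd0 : d' = 0 := by omega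
          subst hd0
          obtain ⟨c, hc, hlab⟩ := depth_zero_iff_root.1 hm
          cases c with
          | node x' csB =>
            have hx : x = x' := hlab.symm
            subst hx
            obtain ⟨cs₁, cs₂, rfl⟩ := List.append_of_mem hc
            classical
            set csBB := csB.filter (fun t => decide (IndepOf Q l t)) with hcsBB
            set csBAB := csB.filter (fun t => !decide (IndepOf Q l t)) with hcsBAB
            have hBB : ∀ t ∈ csBB, IndepOf Q l t := by
              intro t ht
              rw [hcsBB, List.mem_filter] at ht
              simpa using ht.2
            have hBAB : ∀ t ∈ csBAB, ¬ IndepOf Q l t := by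
              intro t ht
              rw [hcsBAB, List.mem_filter] at ht
              simpa using ht.2
            have hperm : csB.Perm (csBB ++ csBAB) := (List.filter_append_perm _ csB).symm
            refine ⟨FTree.node x (csBB ++
              [FTree.node l (csBAB ++ (cs₁ ++ cs₂))]) :: ts, ?_, ?_, ?_⟩
            · exact SwapStep.here hBB hBAB hperm
            · simp only [forestND_cons, nodesDepth_node, List.cons_append, List.mem_cons]
              left
              trivial
            · intro t ht hnx
              rcases List.mem_cons.1 ht with rfl | ht
              · exfalso
                apply hnx
                rw [nodes_node]
                refine List.mem_cons_of_mem _ (mem_forestNodes_iff.2 ⟨FTree.node x csB, hc, ?_⟩)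
                rw [nodes_node]
                exact List.mem_cons_self
              · exact List.mem_cons_of_mem _ ht
        · -- recurse into the children forest
          have hd1 : d' = d + 1 := by omega
          subst hd1
          obtain ⟨cs', hstep, hmem, hpres⟩ := raise_step Q cs x d hm
          refine ⟨FTree.node l cs' :: ts, SwapStep.inside hstep, ?_, ?_⟩
          · simp only [forestND_cons, nodesDepth_node, List.cons_append, List.mem_cons]
            right
            rw [List.mem_append]
            exact Or.inl (List.mem_map.2 ⟨(x, d), hmem, rfl⟩)
          · intro t ht hnx
            rcases List.mem_cons.1 ht with rfl | ht
            · exact absurd (by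
                rw [nodes_node]
                exact List.mem_cons_of_mem _ (mem_forestNodes_of_depth hm)) hnx
            · exact List.mem_cons_of_mem _ ht
    · obtain ⟨ts', hstep, hmem, hpres⟩ := raise_step Q ts x d h
      refine ⟨FTree.node l cs :: ts', SwapStep.tail hstep, ?_, ?_⟩
      · rw [forestND_cons, List.mem_append]
        exact Or.inr hmem
      · intro t ht hnx
        rcases List.mem_cons.1 ht with rfl | ht
        · exact List.mem_cons_self
        · exact List.mem_cons_of_mem _ (hpres t ht hnx)
decreasing_by
  all_goals simp only [FTree.node.sizeOf_spec, List.cons.sizeOf_spec]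
  all_goals omega

theorem raise_to_root (Q : Query) (x : Finset Att) :
    ∀ (d : ℕ) (F : Forest), Q.IsFTreeOf F → Q.PathConstraint F → (x, d) ∈ forestND F →
    ∃ F', Relation.ReflTransGen (fun X Y => SwapStep Q X Y ∧ Q.PathConstraint Y) F F' ∧
      Q.IsFTreeOf F' ∧ Q.PathConstraint F' ∧ (∃ t ∈ F', t.label = x) ∧
      (∀ t ∈ F, x ∉ t.nodes → t ∈ F') := by
  intro d
  induction d with
  | zero =>
    intro F hT hpc h
    exact ⟨F, Relation.ReflTransGen.refl, hT, hpc, depth_zero_iff_root.1 h, fun t ht _ => ht⟩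
  | succ d ih =>
    intro F hT hpc h
    obtain ⟨F₁, hstep, hmem, hpres⟩ := raise_step Q F x d h
    have hpc₁ : Q.PathConstraint F₁ := swapStep_preserves_pc hstep hT.1 hpc
    have hT₁ : Q.IsFTreeOf F₁ := swapStep_preserves_isFTreeOf hstep hT
    obtain ⟨F', hchain, hT', hpc', hroot, hpres'⟩ := ih F₁ hT₁ hpc₁ hmem
    refine ⟨F', Relation.ReflTransGen.head ⟨hstep, hpc₁⟩ hchain, hT', hpc', hroot, ?_⟩
    intro t ht hnx
    exact hpres' t (hpres t ht hnx) hnx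

end Aux17e
/-- **reachability by swaps.** From any f-tree `T` of `Q`
satisfying the path constraint, any two nodes `𝒜` and `ℬ` can be brought into
sibling or ancestor-descendant position by a finite sequence of swap
operations, each preserving the path constraint. -/
theorem swaps_reach_selection_position (Q : Query) (hQ : Q.WF) (T : Forest)
    (hT : Q.IsFTreeOf T) (hpc : Q.PathConstraint T)
    (lA lB : Finset Att) (hA : lA ∈ forestNodes T) (hB : lB ∈ forestNodes T)
    (hne : lA ≠ lB) :
    ∃ T' : Forest,
      Relation.ReflTransGen (fun X Y => SwapStep Q X Y ∧ Q.PathConstraint Y) T T' ∧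
      Q.IsFTreeOf T' ∧
      (Siblings T' lA lB ∨ OnSamePath T' lA lB) := by
  obtain ⟨d, hd⟩ := mem_forestNodes_exists_depth hA
  obtain ⟨T₁, hchain₁, hT₁, hpc₁, ⟨t₁, ht₁, ht₁lab⟩, -⟩ := raise_to_root Q lA d T hT hpc hd
  have hB₁ : lB ∈ forestNodes T₁ := by
    rw [hT₁.2 lB, ← hT.2 lB]
    exact hB
  by_cases hcase : lB ∈ t₁.nodes
  · -- lA and lB in the same tree, with lA at the root: same path
    cases t₁ with
    | node l cs =>
      have hx : lA = l := ht₁lab.symm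
      subst hx
      obtain ⟨p, hp, hlBp⟩ := mem_nodes_exists_path _ lB hcase
      exact ⟨T₁, hchain₁, hT₁,
        Or.inr ⟨p, mem_forestPaths_iff.2 ⟨_, ht₁, hp⟩, root_mem_path hp, hlBp⟩⟩
  · -- bring lB to the root of its own tree: siblings as roots
    obtain ⟨d', hd'⟩ := mem_forestNodes_exists_depth hB₁
    obtain ⟨T₂, hchain₂, hT₂, hpc₂, ⟨t₂, ht₂, ht₂lab⟩, hpres⟩ :=
      raise_to_root Q lB d' T₁ hT₁ hpc₁ hd'
    have ht₁T₂ : t₁ ∈ T₂ := hpres t₁ ht₁ hcase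
    exact ⟨T₂, hchain₁.trans hchain₂, hT₂,
      Or.inl ⟨T₂, List.mem_cons_self, ⟨t₁, ht₁T₂, ht₁lab⟩, ⟨t₂, ht₂, ht₂lab⟩⟩⟩
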